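/- Let E be a normed lattice in which every order interval [0,x]_E (x ∈ E⁺) is compact in the weak topology of E, let F be a normed lattice, and let φ: E → F be a continuous, injective, almost interval preserving linear map. Then φ is an interval preserving lattice homomorphism. -/

import Mathlib

open Set

/-- A continuous, injective, almost interval preserving linear map from a
normed lattice with weakly compact order intervals into a normed lattice is an interval
preserving lattice homomorphism. -/
theorem injective_almostIntervalPreserving_is_intervalPreserving_latticeHom
    {E F : Type*}
    [NormedAddCommGroup E] [Lattice E] [HasSolidNorm E] [IsOrderedAddMonoid E]
    [NormedSpace ℝ E]
    [NormedAddCommGroup F] [Lattice F] [HasSolidNorm F] [IsOrderedAddMonoid F]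
    [NormedSpace ℝ F]
    (φ : E →L[ℝ] F)
    (hwc : ∀ x : E, 0 ≤ x → IsCompact (toWeakSpace ℝ E '' Icc 0 x))
    (hinj : Function.Injective φ)
    (hpos : ∀ x : E, 0 ≤ x → 0 ≤ φ x)
    (haip : ∀ x : E, 0 ≤ x → Icc (0 : F) (φ x) = closure (φ '' Icc 0 x)) :
    (∀ x y : E, φ (x ⊔ y) = φ x ⊔ φ y) ∧
      ∀ x : E, 0 ≤ x → φ '' Icc 0 x = Icc 0 (φ x) := by
  -- monotonicity of φ
  have hmono : ∀ u v : E, u ≤ v → φ u ≤ φ v := by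
    intro u v huv
    have h := hpos (v - u) (sub_nonneg.2 huv)
    rw [map_sub] at h
    exact sub_nonneg.1 h
  -- the weak topology on F is Hausdorff
  haveI : T2Space (WeakSpace ℝ F) := by
    refine (t2Space_iff _).2 fun {x y} hxy => ?_
    obtain ⟨f, hf⟩ := SeparatingDual.exists_separating_of_ne (R := ℝ) (V := F) hxy
    exact separated_by_continuous (WeakBilin.eval_continuous _ f) hf
  -- interval preservation
  have hip : ∀ x : E, 0 ≤ x → φ '' Icc 0 x = Icc 0 (φ x) := by
    intro x hx
    have hcomp : IsCompact (toWeakSpace ℝ F '' (φ '' Icc 0 x)) := by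
      have h1 := (hwc x hx).image (WeakSpace.map (𝕜 := ℝ) φ).continuous
      convert h1 using 1
      ext y
      simp only [Set.image_image, Set.mem_image]
      constructor
      · rintro ⟨z, hz, rfl⟩; exact ⟨z, hz, rfl⟩
      · rintro ⟨z, hz, rfl⟩; exact ⟨z, hz, rfl⟩
    have hcl' : IsClosed (toWeakSpace ℝ F '' (φ '' Icc 0 x)) := hcomp.isClosed
    have hcl : IsClosed (φ '' Icc 0 x) := by
      have h2 := hcl'.preimage (toWeakSpaceCLM ℝ F).continuous
      have h3 : (toWeakSpaceCLM ℝ F) ⁻¹' (toWeakSpace ℝ F '' (φ '' Icc 0 x))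
          = φ '' Icc 0 x := by
        ext z
        constructor
        · rintro ⟨w, hw, hwz⟩
          have : w = z := (toWeakSpace ℝ F).injective hwz
          rwa [← this]
        · intro hz
          exact ⟨z, hz, rfl⟩
      rwa [h3] at h2
    rw [haip x hx, hcl.closure_eq]
  refine ⟨?_, hip⟩
  -- infima of positive elements
  have hinf : ∀ a b : E, 0 ≤ a → 0 ≤ b → φ (a ⊓ b) = φ a ⊓ φ b := by
    intro a b ha hb
    have hle : φ (a ⊓ b) ≤ φ a ⊓ φ b :=
      le_inf (hmono _ _ inf_le_left) (hmono _ _ inf_le_right)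
    have h0 : (0 : F) ≤ φ a ⊓ φ b := le_inf (hpos a ha) (hpos b hb)
    have h1 : φ a ⊓ φ b ∈ φ '' Icc 0 a := by rw [hip a ha]; exact ⟨h0, inf_le_left⟩
    have h2 : φ a ⊓ φ b ∈ φ '' Icc 0 b := by rw [hip b hb]; exact ⟨h0, inf_le_right⟩
    obtain ⟨c, hc, hcφ⟩ := h1
    obtain ⟨c', hc', hc'φ⟩ := h2
    have hcc' : c = c' := hinj (hcφ.trans hc'φ.symm)
    subst hcc'
    have hcle : c ≤ a ⊓ b := le_inf hc.2 hc'.2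
    have : φ a ⊓ φ b ≤ φ (a ⊓ b) := hcφ ▸ hmono _ _ hcle
    exact le_antisymm hle this
  -- infima in general, by translation
  have hinf' : ∀ x y : E, φ (x ⊓ y) = φ x ⊓ φ y := by
    intro x y
    set m := x ⊓ y with hm
    have hma : (0 : E) ≤ x - m := sub_nonneg.2 inf_le_left
    have hmb : (0 : E) ≤ y - m := sub_nonneg.2 inf_le_right
    have hinf0 : (x - m) ⊓ (y - m) = 0 := by
      have : (x - m) ⊓ (y - m) = x ⊓ y - m := by
        rw [sub_eq_add_neg, sub_eq_add_neg, sub_eq_add_neg, ← inf_add]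
      rw [this, hm, sub_self]
    have key := hinf _ _ hma hmb
    rw [hinf0, map_zero, map_sub, map_sub] at key
    have : (φ x - φ m) ⊓ (φ y - φ m) = φ x ⊓ φ y - φ m := by
      rw [sub_eq_add_neg, sub_eq_add_neg, sub_eq_add_neg, ← inf_add]
    rw [this] at key
    exact (sub_eq_zero.1 key.symm).symm
  -- suprema
  intro x y
  have h1 : φ (x ⊔ y) + φ (x ⊓ y) = φ x + φ y := by
    rw [← map_add, add_comm (x ⊔ y), inf_add_sup, map_add]
  have h2 : (φ x ⊔ φ y) + (φ x ⊓ φ y) = φ x + φ y := by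
    rw [add_comm, inf_add_sup]
  rw [hinf'] at h1
  exact add_right_cancel (h1.trans h2.symm)
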